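/- Suppose (s₁,s₂,z₁,z₂) lies in the open set where all five exponentials e^{2πi(s₂−1)−2πi(z₁+z₂)}, e^{2πi(s₂−1)−2πi z₂}, e^{2πi z₂}, e^{2πi(z₁+z₂)}, e^{2πi z₁} avoid the ray [1,∞), and suppose (z₁,z₂) is a critical point of Φ^{+(s₁,s₂)}, i.e. ∂Φ^{+(s₁,s₂)}/∂z₁ = ∂Φ^{+(s₁,s₂)}/∂z₂ = 0 at (z₁,z₂). Then, setting Z = e^{2πi z₁}, W = e^{2πi z₂}, U = (ZW)^{−1}, B₁ = e^{2πi s₁}, B₂ = e^{2πi s₂}, the following algebraic equations hold: (1 − B₂U)(1 − U^{−1}) = B₁^{−1}B₂(1 − Z) and (1 − B₂U)(1 − U^{−1}) = B₂(1 − B₂W^{−1})(1 − W). -/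

import Mathlib

open Real

/-- The dilogarithm `Li₂(z) = -∫₀¹ log(1 - t z)/t dt` (principal branch of `log`). -/
noncomputable def Li2 (z : ℂ) : ℂ :=
  -∫ t in (0:ℝ)..1, Complex.log (1 - (t:ℂ) * z) / (t:ℂ)

/-- `z` avoids the ray `[1,∞) ⊆ ℂ`. -/
def OffRay (z : ℂ) : Prop := ¬(z.im = 0 ∧ 1 ≤ z.re)

/-- The potential function `Φ^{ε(s₁,s₂)}(z₁,z₂)` of the Whitehead link, where `ε = 1`
gives `Φ^{+(s₁,s₂)}` and `ε = -1` gives `Φ^{-(s₁,s₂)}`. -/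
noncomputable def PhiS (ε s₁ s₂ z₁ z₂ : ℂ) : ℂ :=
  (1 / (2 * (π:ℂ) * Complex.I)) *
    (ε * (2*(π:ℂ)*Complex.I*(s₁ - 1)) * (2*(π:ℂ)*Complex.I*(z₁ - 1/2))
     - (2*(π:ℂ)*Complex.I*(s₂ - 1)) * (2*(π:ℂ)*Complex.I*z₁ + 2*(π:ℂ)*Complex.I*z₂)
     + Li2 (Complex.exp (2*(π:ℂ)*Complex.I*(s₂ - 1) - 2*(π:ℂ)*Complex.I*z₁
            - 2*(π:ℂ)*Complex.I*z₂))
     - Li2 (Complex.exp (2*(π:ℂ)*Complex.I*(s₂ - 1) - 2*(π:ℂ)*Complex.I*z₂))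
     + Li2 (Complex.exp (2*(π:ℂ)*Complex.I*z₂))
     - Li2 (Complex.exp (2*(π:ℂ)*Complex.I*(z₁ + z₂)))
     + Li2 (Complex.exp (2*(π:ℂ)*Complex.I*z₁)))

lemma offRay_ne_one {z : ℂ} (hz : OffRay z) : z ≠ 1 := by
  rintro rfl; exact hz ⟨rfl, le_refl 1⟩

lemma offRay_slit {z : ℂ} (hz : OffRay z) {t : ℝ} (ht0 : 0 ≤ t) (ht1 : t ≤ 1) :
    (1 - (t:ℂ) * z) ∈ Complex.slitPlane := by
  rw [Complex.mem_slitPlane_iff]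
  by_contra h
  push_neg at h
  obtain ⟨hre, him⟩ := h
  simp only [Complex.sub_re, Complex.sub_im, Complex.one_re, Complex.one_im,
    Complex.mul_re, Complex.mul_im, Complex.ofReal_re, Complex.ofReal_im,
    zero_mul, sub_zero, zero_add, zero_sub, neg_eq_zero, mul_eq_zero] at hre him
  rw [add_zero, mul_eq_zero] at him
  have htne : t ≠ 0 := by rintro rfl; simp at hre; linarith
  have tpos : 0 < t := lt_of_le_of_ne ht0 (Ne.symm htne)
  have hzim : z.im = 0 := him.resolve_left htne
  apply hz
  refine ⟨hzim, ?_⟩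
  by_contra hlt
  push_neg at hlt
  nlinarith [mul_lt_mul_of_pos_left hlt tpos]

lemma isOpen_offRay : IsOpen {w : ℂ | OffRay w} := by
  have : IsClosed {w : ℂ | w.im = 0 ∧ 1 ≤ w.re} :=
    (isClosed_eq Complex.continuous_im continuous_const).inter
      (isClosed_le continuous_const Complex.continuous_re)
  exact this.isOpen_compl

open intervalIntegral MeasureTheory in
lemma hasDerivAt_Li2 {z : ℂ} (hz : OffRay z) (hz0 : z ≠ 0) :
    HasDerivAt Li2 (-Complex.log (1 - z) / z) z := by
  obtain ⟨ε, hε, hball⟩ := Metric.isOpen_iff.1 isOpen_offRay z hz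
  set ε2 := ε / 2 with hε2def
  have hε2 : 0 < ε2 := half_pos hε
  have hcb : Metric.closedBall z ε2 ⊆ {w : ℂ | OffRay w} :=
    (Metric.closedBall_subset_ball (by linarith)).trans hball
  -- uniform bound on the derivative integrand
  obtain ⟨C, hC⟩ : ∃ C, ∀ t ∈ Set.Icc (0:ℝ) 1, ∀ x ∈ Metric.closedBall z ε2,
      ‖(1 - (t:ℂ) * x)⁻¹‖ ≤ C := by
    have hK : IsCompact ((Set.Icc (0:ℝ) 1) ×ˢ Metric.closedBall z ε2) :=
      isCompact_Icc.prod (isCompact_closedBall _ _)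
    have hcont : ContinuousOn (fun p : ℝ × ℂ => (1 - (p.1:ℂ) * p.2)⁻¹)
        ((Set.Icc (0:ℝ) 1) ×ˢ Metric.closedBall z ε2) := by
      apply ContinuousOn.inv₀
      · exact (continuous_const.sub
          ((Complex.continuous_ofReal.comp continuous_fst).mul continuous_snd)).continuousOn
      · exact fun p hp => Complex.slitPlane_ne_zero (offRay_slit (hcb hp.2) hp.1.1 hp.1.2)
    obtain ⟨C, hC⟩ := hK.exists_bound_of_continuousOn hcont
    exact ⟨C, fun t ht x hx => hC (t, x) ⟨ht, hx⟩⟩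
  have key := intervalIntegral.hasDerivAt_integral_of_dominated_loc_of_deriv_le
    (F := fun (x : ℂ) (t : ℝ) => Complex.log (1 - (t:ℂ) * x) / (t:ℂ))
    (F' := fun (x : ℂ) (t : ℝ) => -(1 - (t:ℂ) * x)⁻¹) (x₀ := z)
    (a := 0) (b := 1) (bound := fun _ => C) (μ := volume) (Metric.ball_mem_nhds z hε2) ?_ ?_ ?_ ?_ ?_ ?_
  · -- conclude
    have hderiv := key.2
    have hG : ∀ t ∈ Set.uIcc (0:ℝ) 1,
        HasDerivAt (fun s : ℝ => Complex.log (1 - (s:ℂ) * z) / z) (-(1 - (t:ℂ) * z)⁻¹) t := by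
      intro t ht
      rw [Set.uIcc_of_le zero_le_one] at ht
      have hin : HasDerivAt (fun s : ℝ => 1 - (s:ℂ) * z) (-z) t := by
        have h1 : HasDerivAt (fun s : ℝ => (s:ℂ)) 1 t := Complex.ofRealCLM.hasDerivAt
        simpa using (h1.mul_const z).const_sub 1
      have hslit := offRay_slit hz ht.1 ht.2
      have hlog := (Complex.hasDerivAt_log hslit).comp t hin
      have := hlog.div_const z
      refine this.congr_deriv ?_
      field_simp [Complex.slitPlane_ne_zero hslit]
    have hii : IntervalIntegrable (fun t : ℝ => -(1 - (t:ℂ) * z)⁻¹) volume 0 1 := by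
      apply ContinuousOn.intervalIntegrable
      rw [Set.uIcc_of_le zero_le_one]
      exact (((continuous_const.sub (Complex.continuous_ofReal.mul
        continuous_const)).continuousOn).inv₀
          (fun t ht => Complex.slitPlane_ne_zero (offRay_slit hz ht.1 ht.2))).neg
    have hval : (∫ t in (0:ℝ)..1, -(1 - (t:ℂ) * z)⁻¹) = Complex.log (1 - z) / z := by
      rw [intervalIntegral.integral_eq_sub_of_hasDerivAt hG hii]
      simp [Complex.log_one]
    rw [hval] at hderiv
    rw [neg_div]; exact hderiv.neg
  · -- hF_meas
    filter_upwards [Metric.ball_mem_nhds z hε] with x hx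
    apply ContinuousOn.aestronglyMeasurable _ measurableSet_uIoc
    rw [Set.uIoc_of_le zero_le_one]
    have hox : OffRay x := hball hx
    apply ContinuousOn.div
    · intro t ht
      have h1 : ContinuousAt (fun s : ℝ => 1 - (s:ℂ) * x) t :=
        (continuous_const.sub (Complex.continuous_ofReal.mul continuous_const)).continuousAt
      exact (ContinuousAt.comp (g := Complex.log) (f := fun s : ℝ => 1 - (s:ℂ) * x)
        ((Complex.hasDerivAt_log
          (offRay_slit hox ht.1.le ht.2)).differentiableAt.continuousAt) h1).continuousWithinAt
    · exact Complex.continuous_ofReal.continuousOn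
    · exact fun t ht => Complex.ofReal_ne_zero.2 (ne_of_gt ht.1)
  · -- hF_int
    set g : ℝ → ℂ := fun t => if t = 0 then -z else Complex.log (1 - (t:ℂ) * z) / (t:ℂ) with hgdef
    have hgcont : ContinuousOn g (Set.Icc 0 1) := by
      intro t ht
      rcases eq_or_ne t 0 with rfl | htne
      · -- continuity at 0 via the slope limit
        have hin : HasDerivAt (fun s : ℝ => 1 - (s:ℂ) * z) (-z) 0 := by
          have h1 : HasDerivAt (fun s : ℝ => (s:ℂ)) 1 0 := Complex.ofRealCLM.hasDerivAt
          simpa using (h1.mul_const z).const_sub 1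
        have hf : HasDerivAt (fun s : ℝ => Complex.log (1 - (s:ℂ) * z)) (-z) 0 := by
          have := (Complex.hasDerivAt_log (by simp : (1 - ((0:ℝ):ℂ) * z) ∈ Complex.slitPlane)).comp
            (0:ℝ) hin
          simpa [Function.comp_def] using this
        rw [hasDerivAt_iff_tendsto_slope] at hf
        have heq : (fun s : ℝ => slope (fun s : ℝ => Complex.log (1 - (s:ℂ) * z)) 0 s)
            =ᶠ[nhdsWithin 0 {(0:ℝ)}ᶜ] g := by
          filter_upwards [self_mem_nhdsWithin] with s hs
          have hs0 : s ≠ 0 := hs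
          simp only [hgdef, slope, vsub_eq_sub, sub_zero, if_neg hs0]
          norm_num
          rw [div_eq_inv_mul]
        have htend : Filter.Tendsto g (nhdsWithin 0 {(0:ℝ)}ᶜ) (nhds (-z)) := hf.congr' heq
        have hca : ContinuousAt g 0 := by
          rw [← continuousWithinAt_compl_self]
          have : g 0 = -z := if_pos rfl
          rw [ContinuousWithinAt, this]
          exact htend
        exact hca.continuousWithinAt
      · have h1 : ContinuousAt (fun s : ℝ => 1 - (s:ℂ) * z) t :=
          (continuous_const.sub (Complex.continuous_ofReal.mul continuous_const)).continuousAt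
        have hca : ContinuousAt (fun s : ℝ => Complex.log (1 - (s:ℂ) * z) / (s:ℂ)) t := by
          refine ContinuousAt.div ?_ Complex.continuous_ofReal.continuousAt
            (Complex.ofReal_ne_zero.2 htne)
          exact ContinuousAt.comp (g := Complex.log) (f := fun s : ℝ => 1 - (s:ℂ) * z)
            ((Complex.hasDerivAt_log
              (offRay_slit hz ht.1 ht.2)).differentiableAt.continuousAt) h1
        have hev : (fun s : ℝ => Complex.log (1 - (s:ℂ) * z) / (s:ℂ)) =ᶠ[nhds t] g := by
          filter_upwards [isOpen_compl_singleton.mem_nhds (htne : t ∈ ({(0:ℝ)}ᶜ : Set ℝ))] with s hs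
          exact (if_neg (show s ≠ 0 from hs)).symm
        exact (hca.congr hev).continuousWithinAt
    have hgint : IntervalIntegrable g volume 0 1 := by
      apply ContinuousOn.intervalIntegrable
      rwa [Set.uIcc_of_le zero_le_one]
    rw [intervalIntegrable_iff] at hgint ⊢
    refine hgint.congr_fun ?_ measurableSet_uIoc
    intro t ht
    rw [Set.uIoc_of_le zero_le_one] at ht
    simp [hgdef, if_neg (ne_of_gt ht.1)]
  · -- hF'_meas
    apply ContinuousOn.aestronglyMeasurable _ measurableSet_uIoc
    rw [Set.uIoc_of_le zero_le_one]
    exact (((continuous_const.sub (Complex.continuous_ofReal.mul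
      continuous_const)).continuousOn).inv₀
        (fun t ht => Complex.slitPlane_ne_zero (offRay_slit hz ht.1.le ht.2))).neg
  · -- h_bound
    refine MeasureTheory.ae_of_all _ fun t ht x hx => ?_
    rw [Set.uIoc_of_le zero_le_one] at ht
    rw [norm_neg]
    exact hC t ⟨ht.1.le, ht.2⟩ x (Metric.ball_subset_closedBall hx)
  · -- bound integrable
    exact intervalIntegrable_const
  · -- h_diff
    refine MeasureTheory.ae_of_all _ fun t ht x hx => ?_
    rw [Set.uIoc_of_le zero_le_one] at ht
    have hox : OffRay x := hcb (Metric.ball_subset_closedBall hx)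
    have hslit := offRay_slit hox ht.1.le ht.2
    have hin : HasDerivAt (fun x : ℂ => 1 - (t:ℂ) * x) (-(t:ℂ)) x := by
      simpa using ((hasDerivAt_id x).const_mul (t:ℂ)).const_sub 1
    have hlog := (Complex.hasDerivAt_log hslit).comp x hin
    have := hlog.div_const (t:ℂ)
    refine this.congr_deriv ?_
    have htne : (t:ℂ) ≠ 0 := Complex.ofReal_ne_zero.2 (ne_of_gt ht.1)
    field_simp [Complex.slitPlane_ne_zero hslit]

lemma hasDerivAt_Li2_exp {f : ℂ → ℂ} {f' x : ℂ} (hf : HasDerivAt f f' x)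
    (h : OffRay (Complex.exp (f x))) :
    HasDerivAt (fun z => Li2 (Complex.exp (f z)))
      (-Complex.log (1 - Complex.exp (f x)) * f') x := by
  have hexp : HasDerivAt (fun z => Complex.exp (f z)) (Complex.exp (f x) * f') x :=
    (Complex.hasDerivAt_exp (f x)).comp x hf
  have := (hasDerivAt_Li2 h (Complex.exp_ne_zero _)).comp x hexp
  refine this.congr_deriv ?_
  field_simp [Complex.exp_ne_zero]

lemma two_pi_I_ne : (2*(π:ℂ)*Complex.I) ≠ 0 :=
  mul_ne_zero (mul_ne_zero two_ne_zero (Complex.ofReal_ne_zero.2 Real.pi_ne_zero)) Complex.I_ne_zero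

lemma crit1 (s₁ s₂ z₁ z₂ : ℂ)
    (h1 : OffRay (Complex.exp (2*(π:ℂ)*Complex.I*(s₂ - 1) - 2*(π:ℂ)*Complex.I*(z₁ + z₂))))
    (h4 : OffRay (Complex.exp (2*(π:ℂ)*Complex.I*(z₁ + z₂))))
    (h5 : OffRay (Complex.exp (2*(π:ℂ)*Complex.I*z₁)))
    (hc1 : deriv (fun z => PhiS 1 s₁ s₂ z z₂) z₁ = 0) :
    2*(π:ℂ)*Complex.I*(s₁-1) - 2*(π:ℂ)*Complex.I*(s₂-1)
      + Complex.log (1 - Complex.exp (2*(π:ℂ)*Complex.I*(s₂ - 1) - 2*(π:ℂ)*Complex.I*z₁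
          - 2*(π:ℂ)*Complex.I*z₂))
      + Complex.log (1 - Complex.exp (2*(π:ℂ)*Complex.I*(z₁ + z₂)))
      - Complex.log (1 - Complex.exp (2*(π:ℂ)*Complex.I*z₁)) = 0 := by
  set c := 2*(π:ℂ)*Complex.I with hc
  have hcne : c ≠ 0 := two_pi_I_ne
  have h1' : OffRay (Complex.exp (c*(s₂ - 1) - c*z₁ - c*z₂)) := by
    rw [show c*(s₂ - 1) - c*z₁ - c*z₂ = c*(s₂ - 1) - c*(z₁ + z₂) by ring]
    exact h1
  have hT1 : HasDerivAt (fun z : ℂ => 1*(c*(s₁ - 1))*(c*(z - 1/2))) (1*(c*(s₁ - 1))*(c*1)) z₁ :=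
    (((hasDerivAt_id z₁).sub_const (1/2)).const_mul c).const_mul (1*(c*(s₁ - 1)))
  have hT2 : HasDerivAt (fun z : ℂ => (c*(s₂ - 1))*(c*z + c*z₂)) ((c*(s₂ - 1))*(c*1)) z₁ := by
    have := (((hasDerivAt_id z₁).const_mul c).add_const (c*z₂)).const_mul (c*(s₂ - 1))
    exact this
  have hx1 : HasDerivAt (fun z : ℂ => c*(s₂ - 1) - c*z - c*z₂) (-(c*1)) z₁ :=
    (((hasDerivAt_id z₁).const_mul c).const_sub (c*(s₂ - 1))).sub_const (c*z₂)
  have hL1 := hasDerivAt_Li2_exp hx1 h1'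
  have hx4 : HasDerivAt (fun z : ℂ => c*(z + z₂)) (c*1) z₁ := by
    have := ((hasDerivAt_id z₁).add_const z₂).const_mul c
    simpa using this
  have hL4 := hasDerivAt_Li2_exp hx4 h4
  have hx5 : HasDerivAt (fun z : ℂ => c*z) (c*1) z₁ := (hasDerivAt_id z₁).const_mul c
  have hL5 := hasDerivAt_Li2_exp hx5 h5
  have hB := ((((((hT1.sub hT2).add hL1).sub
      (hasDerivAt_const z₁ (Li2 (Complex.exp (c*(s₂ - 1) - c*z₂))))).add
      (hasDerivAt_const z₁ (Li2 (Complex.exp (c*z₂))))).sub hL4).add hL5)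
  have hfun : (fun z => PhiS 1 s₁ s₂ z z₂)
      = fun z => (1/c) * (1*(c*(s₁ - 1))*(c*(z - 1/2)) - (c*(s₂ - 1))*(c*z + c*z₂)
        + Li2 (Complex.exp (c*(s₂ - 1) - c*z - c*z₂))
        - Li2 (Complex.exp (c*(s₂ - 1) - c*z₂))
        + Li2 (Complex.exp (c*z₂))
        - Li2 (Complex.exp (c*(z + z₂)))
        + Li2 (Complex.exp (c*z))) := by
    funext z
    rw [PhiS]
  have hPhi := (hB.const_mul (1/c))
  replace hPhi := hPhi.congr_of_eventuallyEq (f₁ := fun z => PhiS 1 s₁ s₂ z z₂)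
    (Filter.Eventually.of_forall fun z => congrFun hfun z)
  have hD0 := hPhi.deriv
  rw [hc1] at hD0
  field_simp at hD0
  have hE : c * (c*(s₁-1) - c*(s₂-1)
      + Complex.log (1 - Complex.exp (c*(s₂ - 1) - c*z₁ - c*z₂))
      + Complex.log (1 - Complex.exp (c*(z₁ + z₂)))
      - Complex.log (1 - Complex.exp (c*z₁))) = 0 := by
    rw [show c*(s₂ - 1) - c*z₁ - c*z₂ = c*(s₂ - 1 - z₁ - z₂) by ring]
    linear_combination -hD0
  exact (mul_eq_zero.mp hE).resolve_left hcne

lemma crit2 (s₁ s₂ z₁ z₂ : ℂ)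
    (h1 : OffRay (Complex.exp (2*(π:ℂ)*Complex.I*(s₂ - 1) - 2*(π:ℂ)*Complex.I*(z₁ + z₂))))
    (h2 : OffRay (Complex.exp (2*(π:ℂ)*Complex.I*(s₂ - 1) - 2*(π:ℂ)*Complex.I*z₂)))
    (h3 : OffRay (Complex.exp (2*(π:ℂ)*Complex.I*z₂)))
    (h4 : OffRay (Complex.exp (2*(π:ℂ)*Complex.I*(z₁ + z₂))))
    (hc2 : deriv (fun z => PhiS 1 s₁ s₂ z₁ z) z₂ = 0) :
    -(2*(π:ℂ)*Complex.I*(s₂-1))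
      + Complex.log (1 - Complex.exp (2*(π:ℂ)*Complex.I*(s₂ - 1) - 2*(π:ℂ)*Complex.I*z₁
          - 2*(π:ℂ)*Complex.I*z₂))
      - Complex.log (1 - Complex.exp (2*(π:ℂ)*Complex.I*(s₂ - 1) - 2*(π:ℂ)*Complex.I*z₂))
      - Complex.log (1 - Complex.exp (2*(π:ℂ)*Complex.I*z₂))
      + Complex.log (1 - Complex.exp (2*(π:ℂ)*Complex.I*(z₁ + z₂))) = 0 := by
  set c := 2*(π:ℂ)*Complex.I with hc
  have hcne : c ≠ 0 := two_pi_I_ne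
  have h1' : OffRay (Complex.exp (c*(s₂ - 1) - c*z₁ - c*z₂)) := by
    rw [show c*(s₂ - 1) - c*z₁ - c*z₂ = c*(s₂ - 1) - c*(z₁ + z₂) by ring]
    exact h1
  have hT2 : HasDerivAt (fun z : ℂ => (c*(s₂ - 1))*(c*z₁ + c*z)) ((c*(s₂ - 1))*(c*1)) z₂ := by
    have := (((hasDerivAt_id z₂).const_mul c).const_add (c*z₁)).const_mul (c*(s₂ - 1))
    exact this
  have hx1 : HasDerivAt (fun z : ℂ => c*(s₂ - 1) - c*z₁ - c*z) (-(c*1)) z₂ :=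
    ((hasDerivAt_id z₂).const_mul c).const_sub (c*(s₂ - 1) - c*z₁)
  have hL1 := hasDerivAt_Li2_exp hx1 h1'
  have hx2 : HasDerivAt (fun z : ℂ => c*(s₂ - 1) - c*z) (-(c*1)) z₂ :=
    ((hasDerivAt_id z₂).const_mul c).const_sub (c*(s₂ - 1))
  have hL2 := hasDerivAt_Li2_exp hx2 h2
  have hx3 : HasDerivAt (fun z : ℂ => c*z) (c*1) z₂ := (hasDerivAt_id z₂).const_mul c
  have hL3 := hasDerivAt_Li2_exp hx3 h3
  have hx4 : HasDerivAt (fun z : ℂ => c*(z₁ + z)) (c*1) z₂ := by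
    have := ((hasDerivAt_id z₂).const_add z₁).const_mul c
    simpa using this
  have hL4 := hasDerivAt_Li2_exp hx4 h4
  have hB := ((((((hasDerivAt_const z₂ (1*(c*(s₁ - 1))*(c*(z₁ - 1/2)))).sub hT2).add
      hL1).sub hL2).add hL3).sub hL4).add
      (hasDerivAt_const z₂ (Li2 (Complex.exp (c*z₁))))
  have hfun : (fun z => PhiS 1 s₁ s₂ z₁ z)
      = fun z => (1/c) * (1*(c*(s₁ - 1))*(c*(z₁ - 1/2)) - (c*(s₂ - 1))*(c*z₁ + c*z)
        + Li2 (Complex.exp (c*(s₂ - 1) - c*z₁ - c*z))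
        - Li2 (Complex.exp (c*(s₂ - 1) - c*z))
        + Li2 (Complex.exp (c*z))
        - Li2 (Complex.exp (c*(z₁ + z)))
        + Li2 (Complex.exp (c*z₁))) := by
    funext z
    rw [PhiS]
  have hPhi := (hB.const_mul (1/c))
  replace hPhi := hPhi.congr_of_eventuallyEq (f₁ := fun z => PhiS 1 s₁ s₂ z₁ z)
    (Filter.Eventually.of_forall fun z => congrFun hfun z)
  have hD0 := hPhi.deriv
  rw [hc2] at hD0
  field_simp at hD0
  have hE : c * (-(c*(s₂-1))
      + Complex.log (1 - Complex.exp (c*(s₂ - 1) - c*z₁ - c*z₂))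
      - Complex.log (1 - Complex.exp (c*(s₂ - 1) - c*z₂))
      - Complex.log (1 - Complex.exp (c*z₂))
      + Complex.log (1 - Complex.exp (c*(z₁ + z₂)))) = 0 := by
    rw [show c*(s₂ - 1) - c*z₁ - c*z₂ = c*(s₂ - 1 - z₁ - z₂) by ring,
      show c*(s₂ - 1) - c*z₂ = c*(s₂ - 1 - z₂) by ring]
    linear_combination -hD0
  exact (mul_eq_zero.mp hE).resolve_left hcne

theorem stmt_10 (s₁ s₂ z₁ z₂ : ℂ)
    (h1 : OffRay (Complex.exp (2*(π:ℂ)*Complex.I*(s₂ - 1) - 2*(π:ℂ)*Complex.I*(z₁ + z₂))))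
    (h2 : OffRay (Complex.exp (2*(π:ℂ)*Complex.I*(s₂ - 1) - 2*(π:ℂ)*Complex.I*z₂)))
    (h3 : OffRay (Complex.exp (2*(π:ℂ)*Complex.I*z₂)))
    (h4 : OffRay (Complex.exp (2*(π:ℂ)*Complex.I*(z₁ + z₂))))
    (h5 : OffRay (Complex.exp (2*(π:ℂ)*Complex.I*z₁)))
    (hc1 : deriv (fun z => PhiS 1 s₁ s₂ z z₂) z₁ = 0)
    (hc2 : deriv (fun z => PhiS 1 s₁ s₂ z₁ z) z₂ = 0) :
    (1 - Complex.exp (2*(π:ℂ)*Complex.I*s₂) *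
          (Complex.exp (2*(π:ℂ)*Complex.I*z₁) * Complex.exp (2*(π:ℂ)*Complex.I*z₂))⁻¹) *
        (1 - ((Complex.exp (2*(π:ℂ)*Complex.I*z₁) * Complex.exp (2*(π:ℂ)*Complex.I*z₂))⁻¹)⁻¹) =
      (Complex.exp (2*(π:ℂ)*Complex.I*s₁))⁻¹ * Complex.exp (2*(π:ℂ)*Complex.I*s₂) *
        (1 - Complex.exp (2*(π:ℂ)*Complex.I*z₁)) ∧
    (1 - Complex.exp (2*(π:ℂ)*Complex.I*s₂) *
          (Complex.exp (2*(π:ℂ)*Complex.I*z₁) * Complex.exp (2*(π:ℂ)*Complex.I*z₂))⁻¹) *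
        (1 - ((Complex.exp (2*(π:ℂ)*Complex.I*z₁) * Complex.exp (2*(π:ℂ)*Complex.I*z₂))⁻¹)⁻¹) =
      Complex.exp (2*(π:ℂ)*Complex.I*s₂) *
        (1 - Complex.exp (2*(π:ℂ)*Complex.I*s₂) * (Complex.exp (2*(π:ℂ)*Complex.I*z₂))⁻¹) *
        (1 - Complex.exp (2*(π:ℂ)*Complex.I*z₂)) := by
  have hE1 := crit1 s₁ s₂ z₁ z₂ h1 h4 h5 hc1
  have hE2 := crit2 s₁ s₂ z₁ z₂ h1 h2 h3 h4 hc2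
  set c := 2*(π:ℂ)*Complex.I with hc
  have hexpc : Complex.exp c = 1 := Complex.exp_two_pi_mul_I
  have h1' : OffRay (Complex.exp (c*(s₂ - 1) - c*z₁ - c*z₂)) := by
    rw [show c*(s₂ - 1) - c*z₁ - c*z₂ = c*(s₂ - 1) - c*(z₁ + z₂) by ring]
    exact h1
  have hne1 : 1 - Complex.exp (c*(s₂ - 1) - c*z₁ - c*z₂) ≠ 0 :=
    sub_ne_zero.2 (Ne.symm (offRay_ne_one h1'))
  have hne2 : 1 - Complex.exp (c*(s₂ - 1) - c*z₂) ≠ 0 :=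
    sub_ne_zero.2 (Ne.symm (offRay_ne_one h2))
  have hne3 : 1 - Complex.exp (c*z₂) ≠ 0 := sub_ne_zero.2 (Ne.symm (offRay_ne_one h3))
  have hne4 : 1 - Complex.exp (c*(z₁ + z₂)) ≠ 0 := sub_ne_zero.2 (Ne.symm (offRay_ne_one h4))
  have hne5 : 1 - Complex.exp (c*z₁) ≠ 0 := sub_ne_zero.2 (Ne.symm (offRay_ne_one h5))
  -- values of the exponentials
  have hv1 : Complex.exp (c*(s₂ - 1) - c*z₁ - c*z₂)
      = Complex.exp (c*s₂) / (Complex.exp (c*z₁) * Complex.exp (c*z₂)) := by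
    rw [show c*(s₂ - 1) - c*z₁ - c*z₂ = c*s₂ - c - c*z₁ - c*z₂ by ring]
    rw [Complex.exp_sub, Complex.exp_sub, Complex.exp_sub, hexpc]
    field_simp
  have hv2 : Complex.exp (c*(s₂ - 1) - c*z₂) = Complex.exp (c*s₂) / Complex.exp (c*z₂) := by
    rw [show c*(s₂ - 1) - c*z₂ = c*s₂ - c - c*z₂ by ring]
    rw [Complex.exp_sub, Complex.exp_sub, hexpc]
    field_simp
  have hv4 : Complex.exp (c*(z₁ + z₂)) = Complex.exp (c*z₁) * Complex.exp (c*z₂) := by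
    rw [mul_add, Complex.exp_add]
  have hvs1 : Complex.exp (c*(s₁ - 1)) = Complex.exp (c*s₁) := by
    rw [mul_sub, mul_one, Complex.exp_sub, hexpc, div_one]
  have hvs2 : Complex.exp (c*(s₂ - 1)) = Complex.exp (c*s₂) := by
    rw [mul_sub, mul_one, Complex.exp_sub, hexpc, div_one]
  -- exponentiate the two critical point equations
  have he1 := congrArg Complex.exp hE1
  rw [Complex.exp_zero, Complex.exp_sub, Complex.exp_add, Complex.exp_add, Complex.exp_sub,
    Complex.exp_log hne1, Complex.exp_log hne4, Complex.exp_log hne5, hvs1, hvs2,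
    hv1, hv4] at he1
  have he2 := congrArg Complex.exp hE2
  rw [Complex.exp_zero, Complex.exp_add, Complex.exp_sub, Complex.exp_sub, Complex.exp_add,
    Complex.exp_log hne1, Complex.exp_log hne2, Complex.exp_log hne3, Complex.exp_log hne4,
    Complex.exp_neg, hvs2, hv1, hv2, hv4] at he2
  have hA : Complex.exp (c*s₁) ≠ 0 := Complex.exp_ne_zero _
  have hBz : Complex.exp (c*s₂) ≠ 0 := Complex.exp_ne_zero _
  have hZ : Complex.exp (c*z₁) ≠ 0 := Complex.exp_ne_zero _
  have hW : Complex.exp (c*z₂) ≠ 0 := Complex.exp_ne_zero _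
  rw [hv1] at hne1
  rw [hv2] at hne2
  rw [hv4] at hne4
  have hq1 : Complex.exp (c*z₁) * Complex.exp (c*z₂) - Complex.exp (c*s₂) ≠ 0 := by
    intro h
    rw [sub_eq_zero] at h
    exact hne1 (by rw [← h, div_self (mul_ne_zero hZ hW), sub_self])
  have hq2 : Complex.exp (c*z₂) - Complex.exp (c*s₂) ≠ 0 := by
    intro h
    rw [sub_eq_zero] at h
    exact hne2 (by rw [← h, div_self hW, sub_self])
  constructor
  · field_simp [hq1, hq2] at he1 ⊢
    linear_combination he1
  · field_simp [hq1, hq2] at he2 ⊢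
    have hden : Complex.exp (c*s₂) * (Complex.exp (c*z₁) * Complex.exp (c*z₂)) *
        (Complex.exp (c*z₂) - Complex.exp (c*s₂)) * (1 - Complex.exp (c*z₂)) ≠ 0 :=
      mul_ne_zero (mul_ne_zero (mul_ne_zero hBz (mul_ne_zero hZ hW)) hq2) hne3
    linear_combination he2
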